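/- arXiv:2501.14560 — 3 statements merged into one kernel-verified Lean document; each statement's English description precedes it below -/
import Mathlib

section
/- Let 1 < q < p and M, c, ρ > 0, N ≥ 1. Suppose w : B_ρ \ {0} → (0,∞) satisfies w(x) ≤ c |x|^{−(p−q)/(q−1)} exp(−M |x|^{−(p−q)/(q−1)}) for all x ∈ B_ρ \ {0} ⊆ ℝ^N. Then for every r ∈ (0, ρ), the integral ∫_{B_r} w(x)^{−1/(p−1)} dx = +∞. In particular, w does not belong to the Muckenhoupt class A_p. -/
open Real MeasureTheory Set Metric

open scoped ENNReal NNReal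

/-- A nonnegative weight `w` belongs to the Muckenhoupt class `A_p` relative to a
domain `Ω` if `w` and `w^{-1/(p-1)}` are integrable on balls contained in `Ω` and
the average inequality `⨍_B w ≤ C (⨍_B w^{-1/(p-1)})^{1-p}` holds on such balls. -/
def MemMuckenhouptOn {N : ℕ} (p : ℝ) (Ω : Set (EuclideanSpace ℝ (Fin N)))
    (w : EuclideanSpace ℝ (Fin N) → ℝ) : Prop :=
  (∀ x r, 0 < r → Metric.ball x r ⊆ Ω → MeasureTheory.IntegrableOn w (Metric.ball x r)) ∧
  (∀ x r, 0 < r → Metric.ball x r ⊆ Ω →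
    MeasureTheory.IntegrableOn (fun y => w y ^ (-(1 / (p - 1)))) (Metric.ball x r)) ∧
  ∃ C > 0, ∀ x r, 0 < r → Metric.ball x r ⊆ Ω →
    ⨍ y in Metric.ball x r, w y ≤
      C * (⨍ y in Metric.ball x r, w y ^ (-(1 / (p - 1)))) ^ (1 - p)

/-- a weight decaying like |x|^{−(p−q)/(q−1)} exp(−M|x|^{−(p−q)/(q−1)})
has divergent ∫ w^{−1/(p−1)} on every small ball, hence is not in A_p. -/
theorem weight_not_muckenhoupt {N : ℕ} (p q M c ρ : ℝ)
    (hq : 1 < q) (hpq : q < p) (hM : 0 < M) (hc : 0 < c) (hρ : 0 < ρ) (hN : 1 ≤ N)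
    (w : EuclideanSpace ℝ (Fin N) → ℝ)
    (hwpos : ∀ x ∈ Metric.ball (0 : EuclideanSpace ℝ (Fin N)) ρ \ {0}, 0 < w x)
    (hwbd : ∀ x ∈ Metric.ball (0 : EuclideanSpace ℝ (Fin N)) ρ \ {0},
      w x ≤ c * ‖x‖ ^ (-((p - q) / (q - 1))) * Real.exp (-M * ‖x‖ ^ (-((p - q) / (q - 1))))) :
    (∀ r ∈ Set.Ioo (0 : ℝ) ρ,
      ∫⁻ x in Metric.ball (0 : EuclideanSpace ℝ (Fin N)) r,
        ENNReal.ofReal (w x ^ (-(1 / (p - 1)))) = ⊤) ∧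
    ¬ MemMuckenhouptOn p (Metric.ball (0 : EuclideanSpace ℝ (Fin N)) ρ) w := by
  have hp1 : (1:ℝ) < p := hq.trans hpq
  obtain ⟨α, hα_def⟩ : ∃ a : ℝ, a = (p - q) / (q - 1) := ⟨_, rfl⟩
  have hα : 0 < α := hα_def ▸ div_pos (by linarith) (by linarith)
  obtain ⟨β, hβ_def⟩ : ∃ b : ℝ, b = 1 / (p - 1) := ⟨_, rfl⟩
  have hβ : 0 < β := hβ_def ▸ one_div_pos.2 (by linarith)
  obtain ⟨k, hk_def⟩ : ∃ k : ℕ, k = ⌈β + ((N:ℝ) + 1) / α⌉₊ + 1 := ⟨_, rfl⟩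
  have hk0 : 0 < (k:ℝ) := by rw [hk_def]; positivity
  have hkβ : β + ((N:ℝ) + 1) / α ≤ (k:ℝ) := by
    calc β + ((N:ℝ) + 1) / α ≤ (⌈β + ((N:ℝ) + 1) / α⌉₊ : ℝ) := Nat.le_ceil _
    _ ≤ (k:ℝ) := by rw [hk_def]; push_cast; linarith
  obtain ⟨γ, hγ_def⟩ : ∃ g : ℝ, g = α * k - α * β := ⟨_, rfl⟩
  have hγN : (N:ℝ) + 1 ≤ γ := by
    have h1 : α * (((N:ℝ) + 1) / α) ≤ α * ((k:ℝ) - β) :=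
      mul_le_mul_of_nonneg_left (by linarith) hα.le
    rw [mul_div_cancel₀ _ hα.ne'] at h1
    rw [hγ_def]; nlinarith
  have hγpos : 0 < γ := by
    have : (0:ℝ) ≤ N := Nat.cast_nonneg N
    linarith
  obtain ⟨C₀, hC₀_def⟩ : ∃ C : ℝ, C = c ^ (-β) * (M * β / k) ^ k := ⟨_, rfl⟩
  have hMβk : 0 < M * β / k := div_pos (mul_pos hM hβ) hk0
  have hC₀ : 0 < C₀ :=
    hC₀_def ▸ mul_pos (Real.rpow_pos_of_pos hc _) (pow_pos hMβk _)
  -- pointwise lower bound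
  have key : ∀ x : EuclideanSpace ℝ (Fin N),
      x ∈ Metric.ball (0 : EuclideanSpace ℝ (Fin N)) ρ \ {0} →
      C₀ * ‖x‖ ^ (-γ) ≤ w x ^ (-β) := by
    intro x hx
    have hxne : x ≠ 0 := hx.2
    have ht : 0 < ‖x‖ := norm_pos_iff.2 hxne
    set t := ‖x‖ with ht_def
    have hw := hwpos x hx
    have hub := hwbd x hx
    rw [← hα_def] at hub
    have h1 : (c * t ^ (-α) * Real.exp (-M * t ^ (-α))) ^ (-β) ≤ w x ^ (-β) :=
      Real.rpow_le_rpow_of_nonpos hw hub (neg_nonpos.2 hβ.le)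
    refine le_trans ?_ h1
    have htα : (0:ℝ) ≤ t ^ (-α) := Real.rpow_nonneg ht.le _
    have e1 : (c * t ^ (-α) * Real.exp (-M * t ^ (-α))) ^ (-β)
        = c ^ (-β) * t ^ (α * β) * Real.exp (M * β * t ^ (-α)) := by
      rw [Real.mul_rpow (mul_nonneg hc.le htα) (Real.exp_nonneg _),
        Real.mul_rpow hc.le htα,
        ← Real.rpow_mul ht.le, ← Real.exp_mul]
      ring_nf
    rw [e1]
    -- exp lower bound
    have hy0 : 0 < M * β * t ^ (-α) :=
      mul_pos (mul_pos hM hβ) (Real.rpow_pos_of_pos ht _)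
    have hexp : (M * β * t ^ (-α) / k) ^ k ≤ Real.exp (M * β * t ^ (-α)) := by
      have e2 : Real.exp (M * β * t ^ (-α))
          = (Real.exp (M * β * t ^ (-α) / k)) ^ k := by
        rw [← Real.exp_nat_mul, mul_div_cancel₀ _ hk0.ne']
      rw [e2]
      refine pow_le_pow_left₀ (div_nonneg hy0.le hk0.le) ?_ k
      have := Real.add_one_le_exp (M * β * t ^ (-α) / k)
      linarith
    have e3 : c ^ (-β) * t ^ (α * β) * ((M * β * t ^ (-α) / k) ^ k)
        = C₀ * t ^ (-γ) := by
      have e4 : (M * β * t ^ (-α) / k) ^ k = (M * β / k) ^ k * t ^ (-(α * k)) := by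
        rw [show M * β * t ^ (-α) / k = M * β / k * t ^ (-α) by ring, mul_pow,
          ← Real.rpow_natCast (t ^ (-α)) k, ← Real.rpow_mul ht.le]
        ring_nf
      rw [e4, hC₀_def]
      rw [show c ^ (-β) * t ^ (α * β) * ((M * β / k) ^ k * t ^ (-(α * k)))
        = c ^ (-β) * (M * β / k) ^ k * (t ^ (α * β) * t ^ (-(α * k))) by ring]
      rw [← Real.rpow_add ht]
      rw [hγ_def]
      ring_nf
    calc C₀ * t ^ (-γ)
        = c ^ (-β) * t ^ (α * β) * ((M * β * t ^ (-α) / k) ^ k) := e3.symm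
      _ ≤ c ^ (-β) * t ^ (α * β) * Real.exp (M * β * t ^ (-α)) := by
          refine mul_le_mul_of_nonneg_left hexp
            (mul_nonneg (Real.rpow_nonneg hc.le _) (Real.rpow_nonneg ht.le _))
  -- main divergence statement
  haveI : Nonempty (Fin N) := ⟨⟨0, hN⟩⟩
  obtain ⟨V, hV_def⟩ : ∃ v : ℝ≥0∞,
      v = volume (Metric.ball (0 : EuclideanSpace ℝ (Fin N)) 1) := ⟨_, rfl⟩
  have hV0 : V ≠ 0 := by rw [hV_def]; exact (measure_ball_pos _ _ one_pos).ne'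
  have hball : ∀ s : ℝ, 0 ≤ s →
      volume (Metric.ball (0 : EuclideanSpace ℝ (Fin N)) s)
        = ENNReal.ofReal (s ^ ((N:ℝ))) * V := by
    intro s hs
    rw [Measure.addHaar_ball volume (0 : EuclideanSpace ℝ (Fin N)) hs, hV_def,
      finrank_euclideanSpace_fin, ← Real.rpow_natCast s N]
  have main : ∀ r ∈ Set.Ioo (0 : ℝ) ρ,
      ∫⁻ x in Metric.ball (0 : EuclideanSpace ℝ (Fin N)) r,
        ENNReal.ofReal (w x ^ (-(1 / (p - 1)))) = ⊤ := by
    intro r hr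
    obtain ⟨hr0, hrρ⟩ := hr
    simp only [← hβ_def]
    set X := ∫⁻ x in Metric.ball (0 : EuclideanSpace ℝ (Fin N)) r,
      ENNReal.ofReal (w x ^ (-β)) with hX_def
    obtain ⟨A, hA_def⟩ : ∃ a : ℝ≥0∞,
      a = ENNReal.ofReal (C₀ * r ^ ((N:ℝ) - γ)) * V := ⟨_, rfl⟩
    have hA0 : A ≠ 0 := by
      rw [hA_def]
      refine mul_ne_zero ?_ hV0
      have : 0 < C₀ * r ^ ((N:ℝ) - γ) := mul_pos hC₀ (Real.rpow_pos_of_pos hr0 _)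
      exact (ENNReal.ofReal_pos.2 this).ne'
    have hn : ∀ n : ℕ, A * n ≤ X := by
      intro n
      set s := r / (n + 1) with hs_def
      have hn1 : (1:ℝ) ≤ (n:ℝ) + 1 := by
        have : (0:ℝ) ≤ n := Nat.cast_nonneg n
        linarith
      have hs0 : 0 < s := by
        rw [hs_def]
        exact div_pos hr0 (by linarith)
      have hsr : s ≤ r := by
        rw [hs_def]
        exact div_le_self hr0.le hn1
      have hsub : Metric.ball (0 : EuclideanSpace ℝ (Fin N)) s \ {0}
          ⊆ Metric.ball (0 : EuclideanSpace ℝ (Fin N)) r :=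
        diff_subset.trans (Metric.ball_subset_ball hsr)
      have step1 : ∫⁻ x in Metric.ball (0 : EuclideanSpace ℝ (Fin N)) s \ {0},
          ENNReal.ofReal (w x ^ (-β)) ≤ X := by
        rw [hX_def]
        exact lintegral_mono_set hsub
      have step2 : ENNReal.ofReal (C₀ * s ^ (-γ)) *
            volume (Metric.ball (0 : EuclideanSpace ℝ (Fin N)) s \ {0})
          ≤ ∫⁻ x in Metric.ball (0 : EuclideanSpace ℝ (Fin N)) s \ {0},
            ENNReal.ofReal (w x ^ (-β)) := by
        rw [← setLIntegral_const]
        refine setLIntegral_mono' (measurableSet_ball.diff (measurableSet_singleton _)) ?_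
        intro x hx
        have hxρ : x ∈ Metric.ball (0 : EuclideanSpace ℝ (Fin N)) ρ \ {0} :=
          ⟨Metric.ball_subset_ball (hsr.trans hrρ.le) hx.1, hx.2⟩
        have hxs : ‖x‖ ≤ s := (mem_ball_zero_iff.1 hx.1).le
        have hxpos : 0 < ‖x‖ := norm_pos_iff.2 hxρ.2
        have h2 : C₀ * s ^ (-γ) ≤ C₀ * ‖x‖ ^ (-γ) := by
          refine mul_le_mul_of_nonneg_left ?_ hC₀.le
          exact Real.rpow_le_rpow_of_nonpos hxpos hxs (neg_nonpos.2 hγpos.le)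
        exact ENNReal.ofReal_le_ofReal (h2.trans (key x hxρ))
      have hmeas : volume (Metric.ball (0 : EuclideanSpace ℝ (Fin N)) s \ {0})
          = ENNReal.ofReal (s ^ ((N:ℝ))) * V := by
        rw [measure_diff_null (measure_singleton _), hball s hs0.le]
      have hreal : C₀ * r ^ ((N:ℝ) - γ) * n ≤ C₀ * s ^ ((N:ℝ) - γ) := by
        have e5 : s ^ ((N:ℝ) - γ) = r ^ ((N:ℝ) - γ) * ((n:ℝ) + 1) ^ (γ - (N:ℝ)) := by
          rw [hs_def, Real.div_rpow hr0.le (by linarith), div_eq_mul_inv,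
            ← Real.rpow_neg (by linarith : (0:ℝ) ≤ (n:ℝ) + 1), neg_sub]
        have e6 : (n:ℝ) ≤ ((n:ℝ) + 1) ^ (γ - (N:ℝ)) := by
          have h7 : ((n:ℝ) + 1) ^ (1:ℝ) ≤ ((n:ℝ) + 1) ^ (γ - (N:ℝ)) :=
            Real.rpow_le_rpow_of_exponent_le hn1 (by linarith)
          rw [Real.rpow_one] at h7
          linarith
        rw [e5]
        have h8 : C₀ * r ^ ((N:ℝ) - γ) * (n:ℝ)
            ≤ C₀ * r ^ ((N:ℝ) - γ) * (((n:ℝ) + 1) ^ (γ - (N:ℝ))) :=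
          mul_le_mul_of_nonneg_left e6
            (mul_nonneg hC₀.le (Real.rpow_nonneg hr0.le _))
        linarith
      have hAn : A * n ≤ ENNReal.ofReal (C₀ * s ^ (-γ)) *
          (ENNReal.ofReal (s ^ ((N:ℝ))) * V) := by
        rw [hA_def, ← mul_assoc,
          ← ENNReal.ofReal_mul (mul_nonneg hC₀.le (Real.rpow_nonneg hs0.le _))]
        rw [show ENNReal.ofReal (C₀ * r ^ ((N:ℝ) - γ)) * V * (n : ℝ≥0∞)
          = ENNReal.ofReal (C₀ * r ^ ((N:ℝ) - γ)) * (n : ℝ≥0∞) * V by ring]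
        refine mul_le_mul_left ?_ V
        rw [← ENNReal.ofReal_natCast n,
          ← ENNReal.ofReal_mul (mul_nonneg hC₀.le (Real.rpow_nonneg hr0.le _))]
        refine ENNReal.ofReal_le_ofReal ?_
        have e8 : C₀ * s ^ (-γ) * s ^ ((N:ℝ)) = C₀ * s ^ ((N:ℝ) - γ) := by
          rw [mul_assoc, ← Real.rpow_add hs0]
          ring_nf
        rw [e8]
        exact hreal
      calc A * n ≤ ENNReal.ofReal (C₀ * s ^ (-γ)) *
            (ENNReal.ofReal (s ^ ((N:ℝ))) * V) := hAn
        _ = ENNReal.ofReal (C₀ * s ^ (-γ)) *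
            volume (Metric.ball (0 : EuclideanSpace ℝ (Fin N)) s \ {0}) := by
            rw [hmeas]
        _ ≤ _ := step2.trans step1
    refine top_unique ?_
    calc (⊤ : ℝ≥0∞) = A * ⊤ := (ENNReal.mul_top hA0).symm
      _ = A * ⨆ n : ℕ, (n : ℝ≥0∞) := by rw [ENNReal.iSup_natCast]
      _ = ⨆ n : ℕ, A * n := by rw [ENNReal.mul_iSup]
      _ ≤ X := iSup_le hn
  refine ⟨main, ?_⟩
  rintro ⟨-, h2, -⟩
  have hint := h2 0 (ρ/2) (by positivity) (Metric.ball_subset_ball (by linarith))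
  have hfin : ∫⁻ x in Metric.ball (0 : EuclideanSpace ℝ (Fin N)) (ρ/2),
      (‖w x ^ (-(1 / (p - 1)))‖₊ : ℝ≥0∞) < ⊤ := hint.hasFiniteIntegral
  have hle : ∫⁻ x in Metric.ball (0 : EuclideanSpace ℝ (Fin N)) (ρ/2),
      ENNReal.ofReal (w x ^ (-(1 / (p - 1))))
      ≤ ∫⁻ x in Metric.ball (0 : EuclideanSpace ℝ (Fin N)) (ρ/2),
        (‖w x ^ (-(1 / (p - 1)))‖₊ : ℝ≥0∞) := by
    refine lintegral_mono fun x => ?_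
    rw [← enorm_eq_nnnorm, Real.enorm_eq_ofReal_abs]
    exact ENNReal.ofReal_le_ofReal (le_abs_self _)
  rw [main (ρ/2) ⟨by positivity, by linarith⟩] at hle
  exact absurd (lt_of_le_of_lt hle hfin) (lt_irrefl _)
end

section
/- Let Ω ⊆ ℝ^N, w ∈ C¹(Ω), 1 < q < p, and φ ∈ C²(Ω) with ∇φ(x) ≠ 0 on an open set U ⊆ Ω. Suppose φ satisfies both −div(w|∇φ|^{p−2}∇φ) = λ₁ w φ^{p−1} and −div(|∇φ|^{q−2}∇φ) = λ_q φ^{q−1} pointwise on U, for constants λ₁, λ_q. Define σ := w |∇φ|^{p−q} on U. Then σ satisfies the first-order PDE (∇φ/|∇φ|²)·∇σ + (1/|∇φ|)[λ₁ (φ/|∇φ|)^{p−1} − λ_q (φ/|∇φ|)^{q−1}] σ = 0 everywhere on U. -/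
open scoped RealInnerProductSpace

/-- The divergence of a vector field on ℝ^N: the sum of the diagonal entries of
its Jacobian. -/
noncomputable def vectorDivergence {N : ℕ}
    (F : EuclideanSpace ℝ (Fin N) → EuclideanSpace ℝ (Fin N))
    (x : EuclideanSpace ℝ (Fin N)) : ℝ :=
  ∑ i, fderiv ℝ F x (EuclideanSpace.single i 1) i

lemma inner_gradient_eq' {N : ℕ} (f : EuclideanSpace ℝ (Fin N) → ℝ)
    (x v : EuclideanSpace ℝ (Fin N)) : ⟪gradient f x, v⟫ = fderiv ℝ f x v := by
  simp [gradient, InnerProductSpace.toDual_symm_apply]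

lemma vectorDivergence_congr' {N : ℕ}
    {F₁ F₂ : EuclideanSpace ℝ (Fin N) → EuclideanSpace ℝ (Fin N)}
    {x : EuclideanSpace ℝ (Fin N)} (h : F₁ =ᶠ[nhds x] F₂) :
    vectorDivergence F₁ x = vectorDivergence F₂ x := by
  unfold vectorDivergence
  rw [h.fderiv_eq]

lemma sum_single_eq' {N : ℕ} (v : EuclideanSpace ℝ (Fin N)) :
    ∑ i, v i • EuclideanSpace.single i (1:ℝ) = v := by
  ext j
  have : (∑ i, v i • EuclideanSpace.single i (1:ℝ)) j
      = ∑ i, (v i • EuclideanSpace.single i (1:ℝ)) j := by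
    rw [WithLp.ofLp_sum]; exact Finset.sum_apply j Finset.univ _
  rw [this]
  simp [EuclideanSpace.single_apply, mul_ite]

lemma vectorDivergence_smul' {N : ℕ}
    {c : EuclideanSpace ℝ (Fin N) → ℝ}
    {f : EuclideanSpace ℝ (Fin N) → EuclideanSpace ℝ (Fin N)}
    {x : EuclideanSpace ℝ (Fin N)}
    (hc : DifferentiableAt ℝ c x) (hf : DifferentiableAt ℝ f x) :
    vectorDivergence (fun y => c y • f y) x
      = fderiv ℝ c x (f x) + c x * vectorDivergence f x := by
  unfold vectorDivergence
  rw [fderiv_fun_smul hc hf]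
  have h1 : ∀ i : Fin N,
      (c x • fderiv ℝ f x + (fderiv ℝ c x).smulRight (f x)) (EuclideanSpace.single i 1) i
        = c x * fderiv ℝ f x (EuclideanSpace.single i 1) i
          + fderiv ℝ c x (EuclideanSpace.single i 1) * f x i := by
    intro i
    simp [ContinuousLinearMap.add_apply, ContinuousLinearMap.smul_apply,
      ContinuousLinearMap.smulRight_apply]
    try ring
  simp_rw [h1]
  rw [Finset.sum_add_distrib, ← Finset.mul_sum]
  have h2 : ∑ i, fderiv ℝ c x (EuclideanSpace.single i 1) * f x i = fderiv ℝ c x (f x) := by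
    conv_rhs => rw [← sum_single_eq' (f x)]
    rw [map_sum]
    refine Finset.sum_congr rfl fun i _ => ?_
    rw [map_smul]
    simp [mul_comm]
  rw [h2]
  ring

/-- if φ solves both the weighted p-Laplacian and the q-Laplacian
eigenvalue equations on U, then σ = w|∇φ|^{p−q} solves the first-order PDE
E·∇σ + g σ = 0 on U. -/
theorem sigma_first_order_pde {N : ℕ} (p q lam₁ lamq : ℝ) (hq : 1 < q) (hpq : q < p)
    (Ω U : Set (EuclideanSpace ℝ (Fin N))) (hUΩ : U ⊆ Ω) (hU : IsOpen U)
    (w φ : EuclideanSpace ℝ (Fin N) → ℝ)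
    (hw : ContDiffOn ℝ 1 w Ω) (hφ : ContDiffOn ℝ 2 φ Ω)
    (hgrad : ∀ x ∈ U, gradient φ x ≠ 0) (hφpos : ∀ x ∈ U, 0 < φ x)
    (hP : ∀ x ∈ U,
      - vectorDivergence (fun y => (w y * ‖gradient φ y‖ ^ (p - 2)) • gradient φ y) x
        = lam₁ * w x * φ x ^ (p - 1))
    (hQ : ∀ x ∈ U,
      - vectorDivergence (fun y => (‖gradient φ y‖ ^ (q - 2)) • gradient φ y) x
        = lamq * φ x ^ (q - 1)) :
    ∀ x ∈ U,
      ⟪(‖gradient φ x‖ ^ 2)⁻¹ • gradient φ x,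
          gradient (fun y => w y * ‖gradient φ y‖ ^ (p - q)) x⟫
        + (‖gradient φ x‖)⁻¹ *
            (lam₁ * (φ x / ‖gradient φ x‖) ^ (p - 1)
              - lamq * (φ x / ‖gradient φ x‖) ^ (q - 1)) *
            (w x * ‖gradient φ x‖ ^ (p - q)) = 0 := by
  intro x hx
  set G := gradient φ with hG
  -- differentiability of basic pieces at every point of U
  have hGdiff : ∀ y ∈ U, DifferentiableAt ℝ G y := by
    intro y hy
    have hΩy : Ω ∈ nhds y := Filter.mem_of_superset (hU.mem_nhds hy) hUΩ
    have h2 : ContDiffAt ℝ 2 φ y := (hφ y (hUΩ hy)).contDiffAt hΩy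
    have hfd : ContDiffAt ℝ 1 (fderiv ℝ φ) y := h2.fderiv_right (by norm_num)
    have hcomp : ContDiffAt ℝ 1 (gradient φ) y := by
      have hlin : ContDiff ℝ 1
          ((InnerProductSpace.toDual ℝ (EuclideanSpace ℝ (Fin N))).symm :
            _ → EuclideanSpace ℝ (Fin N)) :=
        (InnerProductSpace.toDual ℝ (EuclideanSpace ℝ (Fin N))).symm.contDiff
      exact hlin.contDiffAt.comp y hfd
    exact hcomp.differentiableAt (by norm_num)
  have hnpos : ∀ y ∈ U, (0:ℝ) < ‖G y‖ := fun y hy => norm_pos_iff.mpr (hgrad y hy)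
  have hnorm : ∀ y ∈ U, DifferentiableAt ℝ (fun z => ‖G z‖) y := fun y hy =>
    (hGdiff y hy).norm ℝ (hgrad y hy)
  have hrpow : ∀ r : ℝ, ∀ y ∈ U, DifferentiableAt ℝ (fun z => ‖G z‖ ^ r) y := fun r y hy =>
    (hnorm y hy).rpow_const (Or.inl (ne_of_gt (hnpos y hy)))
  have hwdiff : ∀ y ∈ U, DifferentiableAt ℝ w y := fun y hy =>
    ((hw y (hUΩ hy)).differentiableWithinAt (by norm_num)).differentiableAt
      (Filter.mem_of_superset (hU.mem_nhds hy) hUΩ)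
  set σ : EuclideanSpace ℝ (Fin N) → ℝ := fun y => w y * ‖G y‖ ^ (p - q) with hσ
  set F : EuclideanSpace ℝ (Fin N) → EuclideanSpace ℝ (Fin N) :=
    fun y => ‖G y‖ ^ (q - 2) • G y with hF
  have hσdiff : DifferentiableAt ℝ σ x := (hwdiff x hx).mul (hrpow (p - q) x hx)
  have hFdiff : DifferentiableAt ℝ F x := (hrpow (q - 2) x hx).smul (hGdiff x hx)
  -- rewrite the p-field as σ • F near x
  have hEq : (fun y => (w y * ‖G y‖ ^ (p - 2)) • G y) =ᶠ[nhds x] (fun y => σ y • F y) := by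
    filter_upwards [hU.mem_nhds hx] with y hy
    rw [hσ, hF]
    simp only
    rw [smul_smul, mul_assoc, ← Real.rpow_add (hnpos y hy)]
    norm_num
  have hdiv : vectorDivergence (fun y => (w y * ‖G y‖ ^ (p - 2)) • G y) x
      = fderiv ℝ σ x (F x) + σ x * vectorDivergence F x := by
    rw [vectorDivergence_congr' hEq, vectorDivergence_smul' hσdiff hFdiff]
  have hPx := hP x hx
  have hQx := hQ x hx
  have hkey : fderiv ℝ σ x (F x)
      = - (lam₁ * w x * φ x ^ (p - 1)) + σ x * (lamq * φ x ^ (q - 1)) := by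
    have h1 : vectorDivergence (fun y => (w y * ‖G y‖ ^ (p - 2)) • G y) x
        = - (lam₁ * w x * φ x ^ (p - 1)) := by linarith
    have h2 : vectorDivergence F x = - (lamq * φ x ^ (q - 1)) := by
      rw [hF]; linarith
    rw [h1, h2] at hdiv
    linarith [hdiv]
  -- express fderiv σ (F x) via the inner product with the gradient
  have hinner : fderiv ℝ σ x (F x) = ‖G x‖ ^ (q - 2) * ⟪gradient σ x, G x⟫ := by
    rw [← inner_gradient_eq', hF]
    exact real_inner_smul_right _ _ _
  set n := ‖G x‖ with hn
  have hnpos' : (0:ℝ) < n := hnpos x hx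
  have hφx : (0:ℝ) < φ x := hφpos x hx
  have h22 : n ^ (2 - q) * n ^ (q - 2) = 1 := by
    rw [← Real.rpow_add hnpos']; norm_num
  have hinnerG : ⟪gradient σ x, G x⟫
      = n ^ (2 - q) * (- (lam₁ * w x * φ x ^ (p - 1)) + σ x * (lamq * φ x ^ (q - 1))) := by
    have hthis := hkey
    rw [hinner] at hthis
    calc ⟪gradient σ x, G x⟫
        = n ^ (2 - q) * n ^ (q - 2) * ⟪gradient σ x, G x⟫ := by rw [h22, one_mul]
      _ = n ^ (2 - q) * (n ^ (q - 2) * ⟪gradient σ x, G x⟫) := by ring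
      _ = _ := by rw [hthis]
  have hterm1 : ⟪(n ^ 2)⁻¹ • G x, gradient σ x⟫
      = (n ^ (2:ℕ))⁻¹ * ⟪gradient σ x, G x⟫ := by
    rw [real_inner_smul_left, real_inner_comm]
  rw [hterm1, hinnerG]
  have hσx : σ x = w x * n ^ (p - q) := rfl
  rw [hσx]
  have hdivp : (φ x / n) ^ (p - 1) = φ x ^ (p - 1) * n ^ (-(p - 1)) := by
    rw [Real.div_rpow (le_of_lt hφx) (le_of_lt hnpos'), Real.rpow_neg (le_of_lt hnpos'),
      div_eq_mul_inv]
  have hdivq : (φ x / n) ^ (q - 1) = φ x ^ (q - 1) * n ^ (-(q - 1)) := by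
    rw [Real.div_rpow (le_of_lt hφx) (le_of_lt hnpos'), Real.rpow_neg (le_of_lt hnpos'),
      div_eq_mul_inv]
  rw [hdivp, hdivq]
  have e1 : (n ^ (2:ℕ))⁻¹ = n ^ (-2 : ℝ) := by
    rw [← Real.rpow_natCast n 2, ← Real.rpow_neg (le_of_lt hnpos')]; norm_num
  have e2 : n⁻¹ = n ^ (-1 : ℝ) := (Real.rpow_neg_one n).symm
  rw [e1, e2]
  have hA : n ^ (-2:ℝ) * n ^ (2 - q) = n ^ (-q) := by
    rw [← Real.rpow_add hnpos']; ring_nf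
  have hB : n ^ (-1:ℝ) * n ^ (-(p - 1)) * n ^ (p - q) = n ^ (-q) := by
    rw [← Real.rpow_add hnpos', ← Real.rpow_add hnpos']; congr 1; ring
  have hC : n ^ (-1:ℝ) * n ^ (-(q - 1)) * n ^ (p - q) = n ^ (-q) * n ^ (p - q) := by
    rw [← Real.rpow_add hnpos', ← Real.rpow_add hnpos', ← Real.rpow_add hnpos']
    congr 1; ring
  linear_combination (-(lam₁ * w x * φ x ^ (p - 1))
      + w x * n ^ (p - q) * (lamq * φ x ^ (q - 1))) * hA
    + (lam₁ * φ x ^ (p - 1) * w x) * hB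
    - (lamq * φ x ^ (q - 1) * w x) * hC
end

section
/- Let 1 < q < p, k₁ > 0, and let x : (0,T) → ℝ^N \ {0} be a C¹ curve with ẋ(τ) = ∇φ(x(τ))/|∇φ(x(τ))|² for a C¹ function φ whose gradient satisfies |∇φ(y)| ≥ k₁ |y|^{1/(q−1)} along the curve, and such that (x/|x|)·(∇φ/|∇φ|²) ≤ 0 along the curve (the curve moves toward the origin). Then for every t ∈ (0,T): ∫₀^t |x(τ)|^{−p/(q−1)} dτ ≥ k₁ · (q−1)/(p−q) · [ |x(t)|^{−(p−q)/(q−1)} − |x(0⁺)|^{−(p−q)/(q−1)} ]. -/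
open Set intervalIntegral
open scoped RealInnerProductSpace

lemma aux_key_bound (p q k₁ α C r gn s : ℝ) (hq1 : 0 < q - 1) (hpq' : 0 < p - q)
    (hα : α = (p - q) / (q - 1)) (hC : C = k₁ * (q - 1) / (p - q)) (hk : 0 < k₁)
    (hr : 0 < r) (hgpos : 0 < gn) (hglow : k₁ * r ^ (1 / (q - 1)) ≤ gn)
    (hsle : -s ≤ r / gn) :
    C * (s / r * (-α) * r ^ (-α - 1)) ≤ r ^ (-(p / (q - 1))) := by
  have hCα : C * α = k₁ := by rw [hα, hC]; field_simp
  have hrp : (0:ℝ) < r ^ (-α - 1) := Real.rpow_pos_of_pos hr _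
  have hexp : r ^ (-α - 1) = r ^ (-(p / (q - 1))) * r ^ (1 / (q - 1)) := by
    rw [← Real.rpow_add hr]
    congr 1
    rw [hα]; field_simp; ring
  have step2 : k₁ * r ^ (-α - 1) / gn ≤ r ^ (-(p / (q - 1))) := by
    rw [div_le_iff₀ hgpos]
    calc k₁ * r ^ (-α - 1) = r ^ (-(p / (q - 1))) * (k₁ * r ^ (1 / (q - 1))) := by
          rw [hexp]; ring
      _ ≤ r ^ (-(p / (q - 1))) * gn := by
          apply mul_le_mul_of_nonneg_left hglow; positivity
  calc C * (s / r * (-α) * r ^ (-α - 1)) = k₁ * (-s) * (r ^ (-α - 1) / r) := by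
        rw [← hCα]; ring
    _ ≤ k₁ * (r / gn) * (r ^ (-α - 1) / r) := by
        apply mul_le_mul_of_nonneg_right (mul_le_mul_of_nonneg_left hsle hk.le)
        positivity
    _ = k₁ * r ^ (-α - 1) / gn := by
        field_simp
    _ ≤ r ^ (-(p / (q - 1))) := step2

/-- lower bound for ∫₀^t |x(τ)|^{−p/(q−1)} dτ along a characteristic
curve moving toward the origin. -/
theorem characteristic_integral_lower_bound {N : ℕ} (p q k₁ T : ℝ)
    (hq : 1 < q) (hpq : q < p) (hk : 0 < k₁) (hT : 0 < T)
    (x : ℝ → EuclideanSpace ℝ (Fin N))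
    (G : EuclideanSpace ℝ (Fin N) → EuclideanSpace ℝ (Fin N))
    (hxc : ContinuousOn x (Set.Ico 0 T)) (hx0 : x 0 ≠ 0)
    (hne : ∀ τ ∈ Set.Ioo 0 T, x τ ≠ 0)
    (hx' : ∀ τ ∈ Set.Ioo 0 T, HasDerivAt x ((‖G (x τ)‖ ^ 2)⁻¹ • G (x τ)) τ)
    (hGlow : ∀ τ ∈ Set.Ioo 0 T, k₁ * ‖x τ‖ ^ (1 / (q - 1)) ≤ ‖G (x τ)‖)
    (htoward : ∀ τ ∈ Set.Ioo 0 T,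
      ⟪(‖x τ‖)⁻¹ • x τ, (‖G (x τ)‖ ^ 2)⁻¹ • G (x τ)⟫ ≤ 0) :
    ∀ t ∈ Set.Ioo 0 T,
      k₁ * (q - 1) / (p - q) *
          (‖x t‖ ^ (-((p - q) / (q - 1))) - ‖x 0‖ ^ (-((p - q) / (q - 1))))
        ≤ ∫ τ in (0 : ℝ)..t, ‖x τ‖ ^ (-(p / (q - 1))) := by
  intro t ht
  obtain ⟨ht0, htT⟩ := ht
  have hq1 : (0:ℝ) < q - 1 := by linarith
  have hpq' : (0:ℝ) < p - q := by linarith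
  set α : ℝ := (p - q) / (q - 1) with hαdef
  set C : ℝ := k₁ * (q - 1) / (p - q) with hCdef
  have hα : 0 < α := div_pos hpq' hq1
  -- positivity of ‖x τ‖ on [0, t]
  have hsub : Icc (0:ℝ) t ⊆ Ico 0 T := fun τ hτ => ⟨hτ.1, lt_of_le_of_lt hτ.2 htT⟩
  have hrpos : ∀ τ ∈ Icc (0:ℝ) t, 0 < ‖x τ‖ := by
    intro τ hτ
    rcases eq_or_lt_of_le hτ.1 with h0 | h0
    · rw [← h0]; simpa [norm_pos_iff] using hx0
    · exact norm_pos_iff.2 (hne τ ⟨h0, lt_of_le_of_lt hτ.2 htT⟩)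
  set F : ℝ → ℝ := fun τ => C * ‖x τ‖ ^ (-α) with hFdef
  set D : ℝ → ℝ := fun τ =>
    C * (⟪x τ, (‖G (x τ)‖ ^ 2)⁻¹ • G (x τ)⟫ / ‖x τ‖ * (-α) * ‖x τ‖ ^ (-α - 1)) with hDdef
  -- derivative of F on the open interval
  have hFderiv : ∀ τ ∈ Ioo (0:ℝ) T, HasDerivAt F (D τ) τ := by
    intro τ hτ
    have hxne : x τ ≠ 0 := hne τ hτ
    have hr : (0:ℝ) < ‖x τ‖ := norm_pos_iff.2 hxne
    have hd := hx' τ hτ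
    have hv : HasDerivAt (fun σ => ⟪x σ, x σ⟫)
        (⟪x τ, (‖G (x τ)‖ ^ 2)⁻¹ • G (x τ)⟫ + ⟪(‖G (x τ)‖ ^ 2)⁻¹ • G (x τ), x τ⟫) τ :=
      hd.inner ℝ hd
    have hv0 : ⟪x τ, x τ⟫ ≠ 0 := by
      simp only [real_inner_self_eq_norm_sq]
      positivity
    have hsq := (Real.hasDerivAt_sqrt hv0).comp τ hv
    simp only [Function.comp_def] at hsq
    have hnorm : HasDerivAt (fun σ => ‖x σ‖)
        (⟪x τ, (‖G (x τ)‖ ^ 2)⁻¹ • G (x τ)⟫ / ‖x τ‖) τ := by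
      have heq : (fun σ => Real.sqrt ⟪x σ, x σ⟫) = fun σ => ‖x σ‖ := by
        funext σ; rw [← norm_eq_sqrt_real_inner]
      rw [heq] at hsq
      refine hsq.congr_deriv ?_
      rw [real_inner_comm ((‖G (x τ)‖ ^ 2)⁻¹ • G (x τ)) (x τ), ← norm_eq_sqrt_real_inner]
      field_simp
      ring
    have h := (hnorm.rpow_const (p := -α) (Or.inl hr.ne')).const_mul C
    simpa only [hDdef, mul_comm, mul_assoc, mul_left_comm] using h
  -- the key pointwise bound: D τ ≤ ‖x τ‖ ^ (-(p/(q-1)))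
  have hbound : ∀ τ ∈ Ioo (0:ℝ) t, D τ ≤ ‖x τ‖ ^ (-(p / (q - 1))) := by
    intro τ hτ
    have hτT : τ ∈ Ioo (0:ℝ) T := ⟨hτ.1, lt_trans hτ.2 htT⟩
    have hxne : x τ ≠ 0 := hne τ hτT
    have hr : (0:ℝ) < ‖x τ‖ := norm_pos_iff.2 hxne
    have hglow := hGlow τ hτT
    have hgpos : 0 < ‖G (x τ)‖ := lt_of_lt_of_le (by positivity) hglow
    -- Cauchy-Schwarz bound on the inner product
    have hsle : -⟪x τ, (‖G (x τ)‖ ^ 2)⁻¹ • G (x τ)⟫ ≤ ‖x τ‖ / ‖G (x τ)‖ := by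
      have h1 : |⟪x τ, (‖G (x τ)‖ ^ 2)⁻¹ • G (x τ)⟫|
          ≤ ‖x τ‖ * ‖(‖G (x τ)‖ ^ 2)⁻¹ • G (x τ)‖ := abs_real_inner_le_norm _ _
      have h2 : ‖(‖G (x τ)‖ ^ 2)⁻¹ • G (x τ)‖ = ‖G (x τ)‖⁻¹ := by
        rw [norm_smul, Real.norm_eq_abs, abs_of_nonneg (by positivity), sq, mul_inv,
          mul_assoc, inv_mul_cancel₀ hgpos.ne', mul_one]
      rw [h2] at h1
      calc -⟪x τ, (‖G (x τ)‖ ^ 2)⁻¹ • G (x τ)⟫ ≤ |⟪x τ, (‖G (x τ)‖ ^ 2)⁻¹ • G (x τ)⟫| :=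
            neg_le_abs _
        _ ≤ ‖x τ‖ * ‖G (x τ)‖⁻¹ := h1
        _ = ‖x τ‖ / ‖G (x τ)‖ := by rw [div_eq_mul_inv]
    simpa only [hDdef] using aux_key_bound p q k₁ α C (‖x τ‖) (‖G (x τ)‖)
      (⟪x τ, (‖G (x τ)‖ ^ 2)⁻¹ • G (x τ)⟫) hq1 hpq' hαdef hCdef hk hr hgpos hglow hsle
  -- continuity / integrability
  have hxcont : ContinuousOn x (Icc 0 t) := hxc.mono hsub
  have hFcont : ContinuousOn F (Icc 0 t) := by
    apply ContinuousOn.mul continuousOn_const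
    exact (hxcont.norm).rpow_const fun τ hτ => Or.inl (hrpos τ hτ).ne'
  have hfcont : ContinuousOn (fun τ => ‖x τ‖ ^ (-(p / (q - 1)))) (Icc 0 t) :=
    (hxcont.norm).rpow_const fun τ hτ => Or.inl (hrpos τ hτ).ne'
  have hfint : MeasureTheory.IntegrableOn (fun τ => ‖x τ‖ ^ (-(p / (q - 1)))) (Icc 0 t) :=
    hfcont.integrableOn_compact isCompact_Icc
  have hmain := intervalIntegral.sub_le_integral_of_hasDeriv_right_of_le ht0.le hFcont
    (fun τ hτ => (hFderiv τ ⟨hτ.1, lt_trans hτ.2 htT⟩).hasDerivWithinAt) hfint hbound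
  calc C * (‖x t‖ ^ (-α) - ‖x 0‖ ^ (-α)) = F t - F 0 := by simp only [hFdef]; ring
    _ ≤ ∫ τ in (0:ℝ)..t, ‖x τ‖ ^ (-(p / (q - 1))) := hmain
end
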